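/- Let p, q ∈ ℂ[x] with deg p = m ≥ 1, deg q = n ≥ 1, and gcd degree k = deg gcd(p,q). Let u be a greatest common divisor of p and q with cofactors v = p/u and w = q/u, and let h : P_k → ℂ be any linear functional with h(u) ≠ 0. Then the linear map Φ : P_k × P_{m−k} × P_{n−k} → ℂ × P_m × P_n defined by Φ(a, b, c) = (h(a), v·a + u·b, w·a + u·c) is injective. -/
import Mathlib


open Polynomial

/-- The squared ℓ²-norm of the coefficient sequence of a polynomial. -/
noncomputable def pnormSq (p : ℂ[X]) : ℝ := ∑ i ∈ p.support, ‖p.coeff i‖ ^ 2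

/-- The ℓ²-norm of the coefficient sequence of a polynomial. -/
noncomputable def pnorm (p : ℂ[X]) : ℝ := Real.sqrt (pnormSq p)

/-- The ℓ²-norm of a pair of polynomials. -/
noncomputable def pairNorm (p q : ℂ[X]) : ℝ := Real.sqrt (pnormSq p + pnormSq q)

/-- The ℓ²-norm of a triple of polynomials. -/
noncomputable def tripleNorm (p q r : ℂ[X]) : ℝ :=
  Real.sqrt (pnormSq p + pnormSq q + pnormSq r)

/-- The degree of the greatest common divisor of two polynomials. -/
noncomputable def gcdDeg (p q : ℂ[X]) : ℕ := (EuclideanDomain.gcd p q).natDegree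

/-- The set 𝒞_{m,n} of pairs of polynomials of degrees exactly m and n. -/
def Cmn (m n : ℕ) : Set (ℂ[X] × ℂ[X]) :=
  {pq | pq.1.degree = (m : WithBot ℕ) ∧ pq.2.degree = (n : WithBot ℕ)}

/-- The GCD manifold 𝒫ᵏ_{m,n} : pairs in 𝒞_{m,n} whose GCD has degree k. -/
def Pmnk (m n k : ℕ) : Set (ℂ[X] × ℂ[X]) :=
  {pq | pq ∈ Cmn m n ∧ gcdDeg pq.1 pq.2 = k}

/-- The distance θ_k(p,q) from (p,q) to the GCD manifold 𝒫ᵏ_{m,n}. -/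
noncomputable def theta (m n k : ℕ) (p q : ℂ[X]) : ℝ :=
  sInf ((fun rs => pairNorm (p - rs.1) (q - rs.2)) '' Pmnk m n k)

/-- The bilinear Sylvester expression (w,v) ↦ p·w − q·v as a linear map. -/
noncomputable def sylMap (p q : ℂ[X]) : ℂ[X] × ℂ[X] →ₗ[ℂ] ℂ[X] :=
  (LinearMap.mulLeft ℂ p).comp (LinearMap.fst ℂ ℂ[X] ℂ[X]) -
    (LinearMap.mulLeft ℂ q).comp (LinearMap.snd ℂ ℂ[X] ℂ[X])

/-- The domain V_j = {(w,v) : deg w ≤ n−j, deg v ≤ m−j} of the j-th Sylvester map. -/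
noncomputable def Vspace (m n j : ℕ) : Submodule ℂ (ℂ[X] × ℂ[X]) :=
  (Polynomial.degreeLE ℂ ((n - j : ℕ) : WithBot ℕ)).prod
    (Polynomial.degreeLE ℂ ((m - j : ℕ) : WithBot ℕ))

/-- At a GCD triplet the Jacobian map Φ(a,b,c) = (h(a), v·a + u·b, w·a + u·c)
is injective. -/
theorem jacobian_injective_at_gcd (m n : ℕ) (hm : 1 ≤ m) (hn : 1 ≤ n)
    (p q : ℂ[X]) (hp : p.degree = (m : WithBot ℕ)) (hq : q.degree = (n : WithBot ℕ))
    (k : ℕ) (hk : gcdDeg p q = k)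
    (u v w : ℂ[X]) (hup : u ∣ p) (huq : u ∣ q)
    (hugr : ∀ d : ℂ[X], d ∣ p → d ∣ q → d ∣ u)
    (hudeg : u.degree = (k : WithBot ℕ))
    (hv : p = u * v) (hw : q = u * w)
    (h : ↥(Polynomial.degreeLE ℂ (k : WithBot ℕ)) →ₗ[ℂ] ℂ)
    (hhu : h ⟨u, Polynomial.mem_degreeLE.mpr hudeg.le⟩ ≠ 0) :
    Function.Injective
      (fun abc : ↥(Polynomial.degreeLE ℂ (k : WithBot ℕ)) ×
          ↥(Polynomial.degreeLE ℂ ((m - k : ℕ) : WithBot ℕ)) ×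
          ↥(Polynomial.degreeLE ℂ ((n - k : ℕ) : WithBot ℕ)) =>
        ((h abc.1, v * (abc.1 : ℂ[X]) + u * (abc.2.1 : ℂ[X]),
            w * (abc.1 : ℂ[X]) + u * (abc.2.2 : ℂ[X])) : ℂ × ℂ[X] × ℂ[X])) := by
  
  intro x y hxy
  obtain ⟨a, b, c⟩ := x
  obtain ⟨a', b', c'⟩ := y
  simp only [Prod.mk.injEq] at hxy
  obtain ⟨h1, h2, h3⟩ := hxy
  have hu0 : u ≠ 0 := by
    intro h0
    rw [h0, Polynomial.degree_zero] at hudeg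
    exact (WithBot.bot_ne_coe) hudeg
  set A : ℂ[X] := (a : ℂ[X]) - (a' : ℂ[X]) with hA
  have hvA : u ∣ v * A := ⟨(b' : ℂ[X]) - b, by rw [hA]; linear_combination h2⟩
  have hwA : u ∣ w * A := ⟨(c' : ℂ[X]) - c, by rw [hA]; linear_combination h3⟩
  -- v and w are coprime
  have hco : IsCoprime v w := by
    rw [← EuclideanDomain.gcd_isUnit_iff]
    have hg1 : EuclideanDomain.gcd v w ∣ v := EuclideanDomain.gcd_dvd_left v w
    have hg2 : EuclideanDomain.gcd v w ∣ w := EuclideanDomain.gcd_dvd_right v w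
    have hdu : u * EuclideanDomain.gcd v w ∣ u :=
      hugr _ (hv ▸ mul_dvd_mul_left u hg1) (hw ▸ mul_dvd_mul_left u hg2)
    have : EuclideanDomain.gcd v w ∣ 1 := by
      rcases hdu with ⟨e, he⟩
      refine ⟨e, mul_left_cancel₀ hu0 ?_⟩
      rw [mul_one]
      conv_lhs => rw [he]
      ring
    exact isUnit_of_dvd_one this
  obtain ⟨s, t, hst⟩ := hco
  have huA : u ∣ A := by
    have : A = s * (v * A) + t * (w * A) := by linear_combination (-A) * hst
    rw [this]
    exact dvd_add (Dvd.dvd.mul_left hvA s) (Dvd.dvd.mul_left hwA t)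
  obtain ⟨T, hT⟩ := huA
  have hAdeg : A.degree ≤ (k : WithBot ℕ) := by
    have ha1 := Polynomial.mem_degreeLE.mp a.2
    have ha2 := Polynomial.mem_degreeLE.mp a'.2
    exact le_trans (Polynomial.degree_sub_le _ _) (max_le ha1 ha2)
  have hTdeg : T.degree ≤ 0 := by
    by_contra hcon
    push_neg at hcon
    have hT0 : T ≠ 0 := by
      intro h0; rw [h0, Polynomial.degree_zero] at hcon
      exact absurd hcon (by simp)
    have : A.degree = u.degree + T.degree := by rw [hT, Polynomial.degree_mul]
    rw [this, hudeg] at hAdeg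
    have : T.degree ≤ 0 := by
      by_contra _
      have h1' : (k : WithBot ℕ) + T.degree ≤ (k : WithBot ℕ) + 0 := by
        simpa using hAdeg
      have := (WithBot.add_le_add_iff_left (by simp : (k : WithBot ℕ) ≠ ⊥)).mp h1'
      exact absurd this (by exact_mod_cast hcon.not_ge)
    exact hcon.not_ge this
  have hTC : T = Polynomial.C (T.coeff 0) := Polynomial.eq_C_of_degree_le_zero hTdeg
  -- use h to show coeff is 0
  have hsub : a - a' = (T.coeff 0) • (⟨u, Polynomial.mem_degreeLE.mpr hudeg.le⟩ :
      ↥(Polynomial.degreeLE ℂ (k : WithBot ℕ))) := by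
    apply Subtype.ext
    show A = T.coeff 0 • u
    rw [hT, hTC]
    simp [mul_comm, Polynomial.smul_eq_C_mul]
  have hhA : h (a - a') = 0 := by rw [map_sub, h1, sub_self]
  rw [hsub, map_smul, smul_eq_mul] at hhA
  have hc0 : T.coeff 0 = 0 := by
    rcases mul_eq_zero.mp hhA with h' | h'
    · exact h'
    · exact absurd h' hhu
  have haa : a = a' := by
    have := hsub
    rw [hc0, zero_smul] at this
    exact sub_eq_zero.mp this
  have hbb : b = b' := by
    apply Subtype.ext
    have : u * (b : ℂ[X]) = u * (b' : ℂ[X]) := by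
      have := h2
      rw [haa] at this
      exact add_left_cancel this
    exact mul_left_cancel₀ hu0 this
  have hcc : c = c' := by
    apply Subtype.ext
    have : u * (c : ℂ[X]) = u * (c' : ℂ[X]) := by
      have := h3
      rw [haa] at this
      exact add_left_cancel this
    exact mul_left_cancel₀ hu0 this
  simp [haa, hbb, hcc]
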